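/- (Stability of the inexact fixed point iteration.) Suppose ‖l̄‖ < c²/(4‖T‖³‖A₁‖); let r* with 0 < r* < c/(2‖T‖³‖A₁‖) and set L := 2 r* ‖T‖³ ‖A₁‖ / c (so 0 < L < 1). Let (ε_k)_{k≥0} be nonnegative real numbers and let (v_n)_{n≥0} be a sequence in H with v₀ = 0 such that, for every n ≥ 0, the unique element h_n ∈ (ker T)⊥ with G h_n = l̄ − G₁(v_n) satisfies ‖P v_{n+1} − h_n‖ ≤ ε_{n+1}, and additionally ‖P v₁ − h₀‖ ≤ ε₀. Assume that for every n ≥ 0 the quantity ℰ_n := Σ_{k=2}^{n+1} ε_k + (1+L)·Σ_{h=0}^{n−3} Σ_{k=3}^{n−h} ε_k·L^{n−h−k} + (ε₁ + L·(ε₀ + ‖l̄‖/c))·Σ_{k=0}^{n−1} Lᵏ + ε₀ + ‖l̄‖/c (sums over empty index ranges being zero) satisfies ℰ_n ≤ r*. Then ‖P v_n‖ ≤ r* for every n ≥ 1; that is, the sequence (P v_n) lies in the ball 𝐁_{r*} = {u ∈ Ran G : ‖u‖ ≤ r*}. -/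

import Mathlib

open scoped RealInnerProductSpace

set_option maxHeartbeats 2000000 in
/-- Stability of the inexact fixed point iteration: if all accumulated perturbation
bounds `ℰ_n` stay below `r*`, then all projected iterates `P v_n` remain in the ball
`𝐁_{r*}` of `Ran G = (ker T)ᗮ`. -/
theorem inexact_fixed_point_iteration_stability
    {V H : Type*} [NormedAddCommGroup V] [InnerProductSpace ℝ V] [CompleteSpace V]
    [NormedAddCommGroup H] [InnerProductSpace ℝ H] [CompleteSpace H]
    (B : V →L[ℝ] V) (α : ℝ) (hα : 0 < α)
    (hB : ∀ v : V, α * ‖v‖ ^ 2 ≤ ⟪B v, v⟫)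
    (T : H →L[ℝ] V) (hT : Function.Surjective T)
    (G : H →L[ℝ] H) (hG : G = (ContinuousLinearMap.adjoint T).comp (B.comp T))
    (P : H →L[ℝ] H)
    (hP : ∀ x : H, P x ∈ (LinearMap.ker (T : H →ₗ[ℝ] V))ᗮ ∧ x - P x ∈ LinearMap.ker (T : H →ₗ[ℝ] V))
    (c : ℝ) (hc : 0 < c) (hcG : ∀ x ∈ (LinearMap.ker (T : H →ₗ[ℝ] V))ᗮ, c * ‖x‖ ≤ ‖G x‖)
    (A₁ : V →L[ℝ] V →L[ℝ] V) (hA₁ : ‖A₁‖ ≠ 0)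
    (G₁ : H → H) (hG₁ : ∀ x : H, G₁ x = ContinuousLinearMap.adjoint T (A₁ (T x) (T x)))
    (lbar : H) (hlbar : lbar ∈ LinearMap.range (ContinuousLinearMap.adjoint T : V →ₗ[ℝ] H))
    (hl : ‖lbar‖ < c ^ 2 / (4 * ‖T‖ ^ 3 * ‖A₁‖))
    (rs : ℝ) (hrs : 0 < rs) (hrs' : rs < c / (2 * ‖T‖ ^ 3 * ‖A₁‖))
    (L : ℝ) (hL : L = 2 * rs * ‖T‖ ^ 3 * ‖A₁‖ / c)
    (ε : ℕ → ℝ) (hε : ∀ k : ℕ, 0 ≤ ε k)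
    (v : ℕ → H) (hv0 : v 0 = 0)
    (hstep : ∀ n : ℕ, ∀ h : H, h ∈ (LinearMap.ker (T : H →ₗ[ℝ] V))ᗮ →
      G h = lbar - G₁ (v n) → ‖P (v (n + 1)) - h‖ ≤ ε (n + 1))
    (hstep0 : ∀ h : H, h ∈ (LinearMap.ker (T : H →ₗ[ℝ] V))ᗮ →
      G h = lbar - G₁ (v 0) → ‖P (v 1) - h‖ ≤ ε 0)
    (hE : ∀ n : ℕ,
      (∑ k ∈ Finset.Icc 2 (n + 1), ε k) +
      (1 + L) * (∑ h ∈ Finset.range (n - 2), ∑ k ∈ Finset.Icc 3 (n - h),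
        ε k * L ^ (n - h - k)) +
      (ε 1 + L * (ε 0 + ‖lbar‖ / c)) * (∑ k ∈ Finset.range n, L ^ k) +
      ε 0 + ‖lbar‖ / c ≤ rs) :
    ∀ n : ℕ, 1 ≤ n → P (v n) ∈ (LinearMap.ker (T : H →ₗ[ℝ] V))ᗮ ∧ ‖P (v n)‖ ≤ rs := by
  have hA₁pos : 0 < ‖A₁‖ := (norm_nonneg A₁).lt_of_ne' hA₁
  -- T is nonzero
  have hTpos : 0 < ‖T‖ := by
    rw [norm_pos_iff]
    intro hT0
    have hV : ∀ u : V, u = 0 := by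
      intro u
      obtain ⟨x, hx⟩ := hT u
      rw [hT0] at hx
      simpa using hx.symm
    have hb : ‖A₁‖ ≤ 0 := A₁.opNorm_le_bound le_rfl fun u => by
      rw [hV u]; simp
    exact absurd hb (not_le.mpr hA₁pos)
  have hLpos : 0 < L := by rw [hL]; positivity
  have hLnn : 0 ≤ L := hLpos.le
  have hL1 : L < 1 := by
    have hden : 0 < 2 * ‖T‖ ^ 3 * ‖A₁‖ := by positivity
    rw [hL, div_lt_one hc]
    have h2 := (lt_div_iff₀ hden).mp hrs'
    nlinarith
  have hl0 : 0 ≤ ‖lbar‖ / c := by positivity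
  -- B is bounded below
  have hBanti : ∀ w : V, α * ‖w‖ ≤ ‖B w‖ := by
    intro w
    rcases eq_or_ne w 0 with h | h
    · simp [h]
    · have h1 := hB w
      have h2 : ⟪B w, w⟫ ≤ ‖B w‖ * ‖w‖ := real_inner_le_norm _ _
      have h3 : 0 < ‖w‖ := norm_pos_iff.mpr h
      nlinarith
  -- B is surjective
  have hBsurj : Function.Surjective B := by
    have hanti : AntilipschitzWith (α⁻¹).toNNReal B := by
      apply AddMonoidHomClass.antilipschitz_of_bound
      intro x
      rw [Real.coe_toNNReal _ (by positivity : (0:ℝ) ≤ α⁻¹)]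
      rw [inv_mul_eq_div, le_div_iff₀ hα]
      have := hBanti x
      linarith
    have hclosed : IsClosed (Set.range B) := hanti.isClosed_range B.uniformContinuous
    have hrange : LinearMap.range (B : V →ₗ[ℝ] V) = ⊤ := by
      have hcs : IsClosed ((LinearMap.range (B : V →ₗ[ℝ] V) : Submodule ℝ V) : Set V) := by
        have : ((LinearMap.range (B : V →ₗ[ℝ] V) : Submodule ℝ V) : Set V) = Set.range B := by
          ext y; simp [LinearMap.mem_range]
        rw [this]; exact hclosed
      haveI : CompleteSpace (LinearMap.range (B : V →ₗ[ℝ] V)) := hcs.completeSpace_coe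
      rw [← Submodule.orthogonal_eq_bot_iff]
      rw [Submodule.eq_bot_iff]
      intro u hu
      have hiu : ⟪B u, u⟫ = 0 := by
        have := (Submodule.mem_orthogonal _ u).mp hu (B u) (LinearMap.mem_range_self _ u)
        simpa [real_inner_comm] using this
      have h1 := hB u
      have hsq : ‖u‖ ^ 2 ≤ 0 := by nlinarith
      have hsq2 : ‖u‖ ^ 2 = 0 := le_antisymm hsq (sq_nonneg _)
      have : ‖u‖ = 0 := by
        have := sq_eq_zero_iff.mp hsq2
        exact this
      exact norm_eq_zero.mp this
    intro y
    have : y ∈ LinearMap.range (B : V →ₗ[ℝ] V) := hrange ▸ Submodule.mem_top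
    exact this
  -- solving the linear problem in (ker T)ᗮ
  have hsolve : ∀ w : H, w ∈ LinearMap.range (ContinuousLinearMap.adjoint T : V →ₗ[ℝ] H) →
      ∃ h : H, h ∈ (LinearMap.ker (T : H →ₗ[ℝ] V))ᗮ ∧ G h = w ∧ ‖h‖ ≤ ‖w‖ / c := by
    rintro w ⟨y, hy⟩
    obtain ⟨u, hu⟩ := hBsurj y
    obtain ⟨x, hx⟩ := hT u
    have hTx : T (P x) = T x := by
      have h2 : T (x - P x) = 0 := (hP x).2
      rw [map_sub, sub_eq_zero] at h2
      exact h2.symm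
    have hGP : G (P x) = w := by
      rw [hG]
      simp only [ContinuousLinearMap.comp_apply]
      rw [hTx, hx, hu]; exact hy
    refine ⟨P x, (hP x).1, hGP, ?_⟩
    have h1 := hcG (P x) (hP x).1
    rw [hGP] at h1
    rw [le_div_iff₀ hc]
    linarith
  -- membership of RHS in range of adjoint
  have hmem : ∀ x : H, lbar - G₁ x ∈ LinearMap.range (ContinuousLinearMap.adjoint T : V →ₗ[ℝ] H) := by
    intro x
    exact Submodule.sub_mem _ hlbar ⟨A₁ (T x) (T x), (hG₁ x).symm⟩
  have hnormadj : ‖ContinuousLinearMap.adjoint T‖ = ‖T‖ :=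
    ContinuousLinearMap.adjoint.norm_map T
  -- quadratic bound on G₁
  have hG₁bound : ∀ x : H, ‖G₁ x‖ ≤ ‖T‖ ^ 3 * ‖A₁‖ * ‖P x‖ ^ 2 := by
    intro x
    have hTx : T x = T (P x) := by
      have h2 : T (x - P x) = 0 := (hP x).2
      rw [map_sub, sub_eq_zero] at h2
      exact h2
    rw [hG₁, hTx]
    have h1 : ‖ContinuousLinearMap.adjoint T (A₁ (T (P x)) (T (P x)))‖ ≤
        ‖T‖ * ‖A₁ (T (P x)) (T (P x))‖ := by
      have := (ContinuousLinearMap.adjoint T).le_opNorm (A₁ (T (P x)) (T (P x)))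
      rwa [hnormadj] at this
    have h2 : ‖A₁ (T (P x)) (T (P x))‖ ≤ ‖A₁‖ * ‖T (P x)‖ * ‖T (P x)‖ :=
      A₁.le_opNorm₂ _ _
    have h3 : ‖T (P x)‖ ≤ ‖T‖ * ‖P x‖ := T.le_opNorm _
    calc ‖ContinuousLinearMap.adjoint T (A₁ (T (P x)) (T (P x)))‖
        ≤ ‖T‖ * ‖A₁ (T (P x)) (T (P x))‖ := h1
      _ ≤ ‖T‖ * (‖A₁‖ * ‖T (P x)‖ * ‖T (P x)‖) :=
          mul_le_mul_of_nonneg_left h2 hTpos.le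
      _ ≤ ‖T‖ * (‖A₁‖ * (‖T‖ * ‖P x‖) * (‖T‖ * ‖P x‖)) := by gcongr
      _ = ‖T‖ ^ 3 * ‖A₁‖ * ‖P x‖ ^ 2 := by ring
  -- the accumulated bound
  obtain ⟨E, hEdef⟩ : ∃ E : ℕ → ℝ, E = fun n =>
      (∑ k ∈ Finset.Icc 2 (n + 1), ε k) +
      (1 + L) * (∑ h ∈ Finset.range (n - 2), ∑ k ∈ Finset.Icc 3 (n - h),
        ε k * L ^ (n - h - k)) +
      (ε 1 + L * (ε 0 + ‖lbar‖ / c)) * (∑ k ∈ Finset.range n, L ^ k) +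
      ε 0 + ‖lbar‖ / c := ⟨_, rfl⟩
  have hErs : ∀ n, E n ≤ rs := by
    intro n
    simp only [hEdef]
    exact hE n
  have hS2nn : ∀ m : ℕ, 0 ≤ ∑ h ∈ Finset.range (m - 2), ∑ k ∈ Finset.Icc 3 (m - h),
      ε k * L ^ (m - h - k) := fun m =>
    Finset.sum_nonneg fun h _ => Finset.sum_nonneg fun k _ =>
      mul_nonneg (hε k) (pow_nonneg hLnn _)
  -- the recursion for E
  have hS2 : ∀ n : ℕ,
      L * (∑ h ∈ Finset.range (n - 2), ∑ k ∈ Finset.Icc 3 (n - h), ε k * L ^ (n - h - k))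
      ≤ ∑ h ∈ Finset.range (n + 1 - 2), ∑ k ∈ Finset.Icc 3 (n + 1 - h),
          ε k * L ^ (n + 1 - h - k) := by
    intro n
    calc L * ∑ h ∈ Finset.range (n - 2), ∑ k ∈ Finset.Icc 3 (n - h), ε k * L ^ (n - h - k)
        = ∑ h ∈ Finset.range (n - 2), ∑ k ∈ Finset.Icc 3 (n - h),
            ε k * L ^ (n + 1 - h - k) := by
          rw [Finset.mul_sum]
          refine Finset.sum_congr rfl fun h hh => ?_
          rw [Finset.mul_sum]
          refine Finset.sum_congr rfl fun k hk => ?_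
          simp only [Finset.mem_range] at hh
          simp only [Finset.mem_Icc] at hk
          have hexp : n + 1 - h - k = (n - h - k) + 1 := by omega
          rw [hexp, pow_succ]
          ring
      _ ≤ ∑ h ∈ Finset.range (n - 2), ∑ k ∈ Finset.Icc 3 (n + 1 - h),
            ε k * L ^ (n + 1 - h - k) := by
          refine Finset.sum_le_sum fun h _ => ?_
          refine Finset.sum_le_sum_of_subset_of_nonneg
            (Finset.Icc_subset_Icc_right (by omega)) ?_
          intro k _ _
          exact mul_nonneg (hε k) (pow_nonneg hLnn _)
      _ ≤ ∑ h ∈ Finset.range (n + 1 - 2), ∑ k ∈ Finset.Icc 3 (n + 1 - h),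
            ε k * L ^ (n + 1 - h - k) := by
          refine Finset.sum_le_sum_of_subset_of_nonneg
            (Finset.range_subset_range.mpr (by omega)) ?_
          intro h _ _
          exact Finset.sum_nonneg fun k _ => mul_nonneg (hε k) (pow_nonneg hLnn _)
  have hErec : ∀ n : ℕ, ε (n + 2) + ‖lbar‖ / c + L * E n ≤ E (n + 1) := by
    intro n
    have hS2n := hS2 n
    have hs1 : ∑ k ∈ Finset.Icc 2 (n + 1 + 1), ε k
        = (∑ k ∈ Finset.Icc 2 (n + 1), ε k) + ε (n + 2) :=
      Finset.sum_Icc_succ_top (by omega) ε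
    have hs3 : ∑ k ∈ Finset.range (n + 1), L ^ k
        = (L * ∑ k ∈ Finset.range n, L ^ k) + 1 := geom_sum_succ
    have s1nn : 0 ≤ ∑ k ∈ Finset.Icc 2 (n + 1), ε k :=
      Finset.sum_nonneg fun k _ => hε k
    have s3nn : 0 ≤ ∑ k ∈ Finset.range n, L ^ k :=
      Finset.sum_nonneg fun k _ => pow_nonneg hLnn _
    simp only [hEdef]
    rw [hs1, hs3]
    set S1 := ∑ k ∈ Finset.Icc 2 (n + 1), ε k with hS1d
    set S2a := ∑ h ∈ Finset.range (n - 2), ∑ k ∈ Finset.Icc 3 (n - h), ε k * L ^ (n - h - k)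
      with hS2ad
    set S2b := ∑ h ∈ Finset.range (n + 1 - 2), ∑ k ∈ Finset.Icc 3 (n + 1 - h),
      ε k * L ^ (n + 1 - h - k) with hS2bd
    set S3 := ∑ k ∈ Finset.range n, L ^ k with hS3d
    nlinarith [mul_nonneg (sub_nonneg.mpr hL1.le) s1nn,
      mul_le_mul_of_nonneg_left hS2n (by linarith : (0:ℝ) ≤ 1 + L),
      mul_nonneg (sub_nonneg.mpr hL1.le) (hε 0), hε 1, hS2nn n, hS2nn (n+1)]
  -- main induction
  have hkey : ∀ n : ℕ, ‖P (v (n + 1))‖ ≤ E n := by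
    intro n
    induction n with
    | zero =>
      obtain ⟨h0, h0mem, h0eq, h0norm⟩ := hsolve _ (hmem (v 0))
      have hb := hstep0 h0 h0mem h0eq
      have hG10 : G₁ (v 0) = 0 := by rw [hG₁, hv0]; simp
      rw [hG10, sub_zero] at h0norm
      have tri := norm_sub_norm_le (P (v 1)) h0
      have hE0 : E 0 = ε 0 + ‖lbar‖ / c := by
        simp [hEdef]
      rw [hE0]
      linarith
    | succ n ih =>
      have han : ‖P (v (n + 1))‖ ≤ rs := ih.trans (hErs n)
      obtain ⟨hn, hnmem, hneq, hnnorm⟩ := hsolve _ (hmem (v (n + 1)))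
      have hb := hstep (n + 1) hn hnmem hneq
      set a := ‖P (v (n + 1))‖ with ha
      have ha0 : 0 ≤ a := norm_nonneg _
      have hGn : ‖lbar - G₁ (v (n + 1))‖ ≤ ‖lbar‖ + ‖T‖ ^ 3 * ‖A₁‖ * a ^ 2 := by
        have := norm_sub_le lbar (G₁ (v (n + 1)))
        have h2 := hG₁bound (v (n + 1))
        linarith
      have hnnorm' : ‖hn‖ ≤ (‖lbar‖ + ‖T‖ ^ 3 * ‖A₁‖ * a ^ 2) / c := by
        refine hnnorm.trans ?_
        gcongr
      have hquad : ‖T‖ ^ 3 * ‖A₁‖ * a ^ 2 / c ≤ L * a := by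
        have hK : (0:ℝ) ≤ ‖T‖ ^ 3 * ‖A₁‖ := by positivity
        have h1 : ‖T‖ ^ 3 * ‖A₁‖ * a ^ 2 ≤ 2 * rs * ‖T‖ ^ 3 * ‖A₁‖ * a := by
          have h2 : a * a ≤ rs * a := mul_le_mul_of_nonneg_right han ha0
          nlinarith [mul_le_mul_of_nonneg_left h2 hK,
            mul_nonneg (mul_nonneg hK hrs.le) ha0]
        calc ‖T‖ ^ 3 * ‖A₁‖ * a ^ 2 / c ≤ (2 * rs * ‖T‖ ^ 3 * ‖A₁‖ * a) / c := by
              gcongr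
          _ = L * a := by rw [hL]; ring
      have tri := norm_sub_norm_le (P (v (n + 1 + 1))) hn
      have hLE : L * a ≤ L * E n := mul_le_mul_of_nonneg_left ih hLnn
      have step : ‖P (v (n + 1 + 1))‖ ≤ ε (n + 2) + ‖lbar‖ / c + L * E n := by
        have hd : (‖lbar‖ + ‖T‖ ^ 3 * ‖A₁‖ * a ^ 2) / c
            = ‖lbar‖ / c + ‖T‖ ^ 3 * ‖A₁‖ * a ^ 2 / c := by ring
        rw [hd] at hnnorm'
        have hεe : ε (n + 1 + 1) = ε (n + 2) := by norm_num
        rw [hεe] at hb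
        have h5 : ‖P (v (n + 1 + 1))‖ ≤ ε (n + 2) + ‖hn‖ := by linarith
        have h6 : ‖hn‖ ≤ ‖lbar‖ / c + L * a := by linarith
        have h7 : L * a ≤ L * E n := hLE
        linarith
      exact step.trans (hErec n)
  intro n hn
  obtain ⟨m, rfl⟩ : ∃ m, n = m + 1 := ⟨n - 1, by omega⟩
  exact ⟨(hP _).1, (hkey m).trans (hErs m)⟩
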